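/- Tail bound for sums of α-th powers of truncated heavy-tailed random variables: let α > 0, b > 1, C ≥ 1, let m be a positive integer and L > m a real number. Let Y_1, …, Y_m be independent real random variables such that for each i, |Y_i| ≥ b^{1/α} almost surely and P(|Y_i| ≥ x) ≤ C·e^{b}·e^{−x^α} for all x > b^{1/α}. Then P( |Y_1|^α + ⋯ + |Y_m|^α ≥ L ) ≤ (CL/m)^m · e^{−L + m + mb}. -/

import Mathlib

open MeasureTheory ProbabilityTheory Filter Real
open scoped ENNReal NNReal

noncomputable section

instance matrixMeasurableSpace {m n α : Type*} [MeasurableSpace α] :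
    MeasurableSpace (Matrix m n α) :=
  inferInstanceAs (MeasurableSpace (m → n → α))

/-- The largest eigenvalue of a real square matrix: the supremum of its real eigenvalues. -/
def lam1 {n : ℕ} (M : Matrix (Fin n) (Fin n) ℝ) : ℝ :=
  sSup {r : ℝ | ∃ v : Fin n → ℝ, v ≠ 0 ∧ M.mulVec v = r • v}

open Set in
lemma exp_lintegral_bound' {Ω : Type*} [MeasurableSpace Ω] (P : Measure Ω) [IsProbabilityMeasure P]
    (X : Ω → ℝ) (hX : Measurable X) (b C s : ℝ) (hb : 0 < b) (hC : 1 ≤ C) (hs0 : 0 < s)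
    (hs1 : s < 1)
    (htail : ∀ t : ℝ, b < t → P {ω | t ≤ X ω} ≤ ENNReal.ofReal (C * Real.exp b * Real.exp (-t))) :
    ∫⁻ ω, ENNReal.ofReal (Real.exp (s * X ω)) ∂P ≤ ENNReal.ofReal (C * Real.exp b / (1 - s)) := by
  set A := Real.exp (s * b) with hA
  have hApos : 0 < A := Real.exp_pos _
  rw [lintegral_eq_lintegral_meas_le P (Filter.Eventually.of_forall fun ω => (Real.exp_pos _).le)
    ((hX.const_mul s).exp.aemeasurable)]
  have hsplit : (Ioi (0:ℝ)) = Ioc 0 A ∪ Ioi A := (Ioc_union_Ioi_eq_Ioi hApos.le).symm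
  rw [hsplit, lintegral_union measurableSet_Ioi (Ioc_disjoint_Ioi le_rfl)]
  have h1 : ∫⁻ t in Ioc (0:ℝ) A, P {ω | t ≤ Real.exp (s * X ω)} ≤ ENNReal.ofReal A := by
    calc ∫⁻ t in Ioc (0:ℝ) A, P {ω | t ≤ Real.exp (s * X ω)}
        ≤ ∫⁻ _ in Ioc (0:ℝ) A, 1 := lintegral_mono fun t => prob_le_one
      _ = volume (Ioc (0:ℝ) A) := by rw [setLIntegral_one]
      _ = ENNReal.ofReal A := by rw [Real.volume_Ioc, sub_zero]
  have h2 : ∫⁻ t in Ioi A, P {ω | t ≤ Real.exp (s * X ω)} ≤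
      ENNReal.ofReal (C * Real.exp b * (Real.exp (s * b - b) * (s / (1 - s)))) := by
    have hr : (-1/s) < -1 := by
      have := one_lt_one_div hs0 hs1
      rw [neg_div]; linarith
    have hstep : ∀ t ∈ Ioi A, P {ω | t ≤ Real.exp (s * X ω)} ≤
        ENNReal.ofReal (C * Real.exp b * t ^ (-1/s)) := by
      intro t ht
      have htA : A < t := ht
      have ht0 : 0 < t := hApos.trans htA
      have hlog : s * b < Real.log t := by
        rw [← Real.log_exp (s*b)]
        exact Real.log_lt_log hApos htA
      have hset : {ω | t ≤ Real.exp (s * X ω)} = {ω | Real.log t / s ≤ X ω} := by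
        ext ω
        simp only [Set.mem_setOf_eq]
        rw [← Real.log_le_iff_le_exp ht0, div_le_iff₀ hs0, mul_comm]
      have hbt : b < Real.log t / s := by
        rw [lt_div_iff₀ hs0]; linarith [hlog]
      have := htail _ hbt
      rw [hset]
      refine this.trans (le_of_eq ?_)
      congr 1
      rw [Real.rpow_def_of_pos ht0]
      ring_nf
    calc ∫⁻ t in Ioi A, P {ω | t ≤ Real.exp (s * X ω)}
        ≤ ∫⁻ t in Ioi A, ENNReal.ofReal (C * Real.exp b * t ^ (-1/s)) :=
          setLIntegral_mono_ae (by fun_prop) (Filter.Eventually.of_forall hstep)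
      _ = ENNReal.ofReal (∫ t in Ioi A, C * Real.exp b * t ^ (-1/s)) := by
          rw [← ofReal_integral_eq_lintegral_ofReal]
          · exact ((integrableOn_Ioi_rpow_of_lt hr hApos).const_mul _)
          · filter_upwards [self_mem_ae_restrict measurableSet_Ioi] with t ht
            have : (0:ℝ) < t := hApos.trans ht
            positivity
      _ = ENNReal.ofReal (C * Real.exp b * (Real.exp (s*b - b) * (s / (1 - s)))) := by
          congr 1
          rw [MeasureTheory.integral_const_mul, integral_Ioi_rpow_of_lt hr hApos]
          congr 1
          have h1s : (1:ℝ) - s ≠ 0 := by linarith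
          have e1 : A ^ (-1/s + 1) = Real.exp (s*b - b) := by
            rw [hA, ← Real.exp_mul]
            congr 1
            field_simp
            ring
          have h2s : -1/s + 1 = -((1-s)/s) := by field_simp; ring
          rw [e1, h2s, div_neg, neg_div, neg_neg, div_div_eq_mul_div, mul_div_assoc]
  calc _ ≤ ENNReal.ofReal A + ENNReal.ofReal (C * Real.exp b * (Real.exp (s*b - b) * (s / (1 - s)))) :=
        add_le_add h1 h2
    _ ≤ ENNReal.ofReal (C * Real.exp b / (1 - s)) := by
        rw [← ENNReal.ofReal_add hApos.le (mul_nonneg (by positivity)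
          (mul_nonneg (Real.exp_pos _).le (div_nonneg hs0.le (by linarith))))]
        apply ENNReal.ofReal_le_ofReal
        have hE : Real.exp (s*b) ≤ Real.exp b := by
          apply Real.exp_le_exp.mpr; nlinarith
        have hexp : C * Real.exp b * (Real.exp (s*b-b) * (s/(1-s))) =
            C * Real.exp (s*b) * (s/(1-s)) := by
          have h1s : (1:ℝ) - s ≠ 0 := by linarith
          rw [Real.exp_sub]
          field_simp
          try ring
        rw [hexp, hA]
        have h1s : (0:ℝ) < 1 - s := by linarith
        rw [le_div_iff₀ h1s]
        have expand : (Real.exp (s*b) + C * Real.exp (s*b) * (s/(1-s))) * (1-s) =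
            Real.exp (s*b) * (1-s) + C * Real.exp (s*b) * s := by
          field_simp
        rw [expand]
        have k1 : Real.exp (s*b) * (1-s) ≤ Real.exp b * (1-s) :=
          mul_le_mul_of_nonneg_right hE h1s.le
        have k2 : C * Real.exp (s*b) * s ≤ C * Real.exp b * s := by
          have hC0 : (0:ℝ) ≤ C := by linarith
          exact mul_le_mul_of_nonneg_right (mul_le_mul_of_nonneg_left hE hC0) hs0.le
        have k3 : Real.exp b * (1-s) + C * Real.exp b * s ≤ C * Real.exp b := by
          nlinarith [mul_le_mul_of_nonneg_right
            (mul_le_mul_of_nonneg_right hC (Real.exp_pos b).le) h1s.le]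
        linarith

/-- **Tail bound for sums of `α`-th powers of truncated heavy-tailed random variables.** -/
theorem truncated_weibull_sum_tail
    (α b C : ℝ) (hα : 0 < α) (hb : 1 < b) (hC : 1 ≤ C)
    (m : ℕ) (hm : 0 < m) (L : ℝ) (hL : (m : ℝ) < L)
    {Ω : Type*} [MeasurableSpace Ω] (P : Measure Ω) [IsProbabilityMeasure P]
    (Y : Fin m → Ω → ℝ) (hmeas : ∀ i, Measurable (Y i))
    (hindep : iIndepFun Y P)
    (hsupp : ∀ i, ∀ᵐ ω ∂P, b ^ (1 / α) ≤ |Y i ω|)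
    (htail : ∀ i, ∀ x : ℝ, b ^ (1 / α) < x →
      P {ω | x ≤ |Y i ω|} ≤
        ENNReal.ofReal (C * Real.exp b * Real.exp (-x ^ α))) :
    P {ω | L ≤ ∑ i, |Y i ω| ^ α} ≤
      ENNReal.ofReal ((C * L / m) ^ m * Real.exp (-L + m + m * b)) := by
  have hb0 : (0:ℝ) < b := by linarith
  have hm0 : (0:ℝ) < m := by exact_mod_cast hm
  have hL0 : (0:ℝ) < L := hm0.trans hL
  have hrpow_meas : Measurable (fun x : ℝ => |x| ^ α) :=
    (Real.continuous_rpow_const hα.le).measurable.comp measurable_abs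
  set X : Fin m → Ω → ℝ := fun i ω => |Y i ω| ^ α with hXdef
  have hXmeas : ∀ i, Measurable (X i) := fun i => hrpow_meas.comp (hmeas i)
  have hXindep : iIndepFun X P :=
    hindep.comp (fun _ x => |x| ^ α) (fun _ => hrpow_meas)
  set s : ℝ := 1 - m / L with hsdef
  have hmL : (m:ℝ) / L < 1 := (div_lt_one hL0).mpr hL
  have hmL0 : (0:ℝ) < m / L := div_pos hm0 hL0
  have hs0 : 0 < s := by rw [hsdef]; linarith
  have hs1 : s < 1 := by rw [hsdef]; linarith
  have h1s : (0:ℝ) < 1 - s := by linarith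
  have hXtail : ∀ i, ∀ t : ℝ, b < t →
      P {ω | t ≤ X i ω} ≤ ENNReal.ofReal (C * Real.exp b * Real.exp (-t)) := by
    intro i t ht
    have ht0 : 0 < t := hb0.trans ht
    have hset : {ω | t ≤ X i ω} = {ω | t ^ (1/α) ≤ |Y i ω|} := by
      ext ω
      simp only [Set.mem_setOf_eq, hXdef, one_div]
      have := Real.le_rpow_inv_iff_of_pos ht0.le (abs_nonneg (Y i ω)) (inv_pos.mpr hα)
      rw [inv_inv] at this
      exact this
    have hlt : b ^ (1/α) < t ^ (1/α) := Real.rpow_lt_rpow hb0.le ht (by positivity)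
    rw [hset]
    refine (htail i _ hlt).trans (le_of_eq ?_)
    congr 3
    rw [← Real.rpow_mul ht0.le, one_div, inv_mul_cancel₀ hα.ne', Real.rpow_one]
  have key : ∀ i, ∫⁻ ω, ENNReal.ofReal (Real.exp (s * X i ω)) ∂P ≤
      ENNReal.ofReal (C * Real.exp b / (1 - s)) := fun i =>
    exp_lintegral_bound' P (X i) (hXmeas i) b C s hb0 hC hs0 hs1 (hXtail i)
  have hint : ∀ i, Integrable (fun ω => Real.exp (s * X i ω)) P := by
    intro i
    refine ⟨(((hXmeas i).const_mul s).exp).aestronglyMeasurable, ?_⟩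
    rw [hasFiniteIntegral_iff_ofReal (Filter.Eventually.of_forall fun ω => (Real.exp_pos _).le)]
    exact lt_of_le_of_lt (key i) ENNReal.ofReal_lt_top
  have hmgf : ∀ i, mgf (X i) P s ≤ C * Real.exp b / (1 - s) := by
    intro i
    rw [mgf, integral_eq_lintegral_of_nonneg_ae
      (Filter.Eventually.of_forall fun ω => (Real.exp_pos _).le)
      (((hXmeas i).const_mul s).exp).aestronglyMeasurable]
    refine le_trans (ENNReal.toReal_mono ENNReal.ofReal_ne_top (key i)) ?_
    rw [ENNReal.toReal_ofReal (by positivity)]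
  have hsum_int : Integrable (fun ω => Real.exp (s * (∑ i, X i) ω)) P :=
    hXindep.integrable_exp_mul_sum hXmeas (fun i _ => hint i)
  have hchern := measure_ge_le_exp_mul_mgf (X := ∑ i, X i) (μ := P) L hs0.le hsum_int
  have hsetid : {ω | L ≤ ∑ i, |Y i ω| ^ α} = {ω | L ≤ (∑ i, X i) ω} := by
    ext ω
    simp [Finset.sum_apply, hXdef]
  have hCL : (0:ℝ) < C * L / m := div_pos (mul_pos (by linarith) hL0) hm0
  have hprod : mgf (∑ i, X i) P s ≤ (C * Real.exp b / (1 - s)) ^ m := by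
    rw [hXindep.mgf_sum hXmeas Finset.univ]
    calc ∏ i, mgf (X i) P s ≤ ∏ _i : Fin m, (C * Real.exp b / (1 - s)) :=
          Finset.prod_le_prod (fun i _ => mgf_nonneg) (fun i _ => hmgf i)
      _ = (C * Real.exp b / (1 - s)) ^ m := by
          rw [Finset.prod_const, Finset.card_univ, Fintype.card_fin]
  have hfinal : Real.exp (-s * L) * (C * Real.exp b / (1 - s)) ^ m =
      (C * L / m) ^ m * Real.exp (-L + m + m * b) := by
    have e1 : (1:ℝ) - s = m / L := by rw [hsdef]; ring
    have e2 : -s * L = -L + (m:ℝ) := by rw [hsdef]; field_simp; ring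
    have e3 : C * Real.exp b / ((m:ℝ) / L) = (C * L / m) * Real.exp b := by
      field_simp
    rw [e1, e2, e3, mul_pow, ← Real.exp_nat_mul]
    simp only [Real.exp_add]
    ring
  rw [hsetid]
  rw [ENNReal.le_ofReal_iff_toReal_le (measure_ne_top _ _)
    (mul_nonneg (pow_nonneg hCL.le m) (Real.exp_pos _).le)]
  refine hchern.trans ?_
  rw [← hfinal]
  exact mul_le_mul_of_nonneg_left hprod (Real.exp_pos _).le
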